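/- Let 3/2<p<3, p+p^2/3<q<p+2p^2/3 and define c* = [p|Q|_p^{q-p} (ap/(2p^2-3q+3p))^{(2p^2-3q+3p)/p^2} (bp/(6pq-8p^2))^{(3q-3p-p^2)/p^2}]^{p/(pq-3q+3p)}. Then for every u ∈ S(c) with 0<c ≤ c*, I(u) ≥ (1/(p|Q|_p^{q-p})) |∇u|_p^{3(q-p)/p} [(c*)^{q-3(q-p)/p} - c^{q-3(q-p)/p}] ≥ 0; in particular i(c) = 0 for 0<c≤c*. -/

import Mathlib

set_option maxHeartbeats 1000000


open MeasureTheory Real Set Filter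

noncomputable section

abbrev E3 := EuclideanSpace ℝ (Fin 3)

def gradPow (p : ℝ) (u : E3 → ℝ) : ℝ := ∫ x : E3, ‖fderiv ℝ u x‖ ^ p
def lpPow (s : ℝ) (u : E3 → ℝ) : ℝ := ∫ x : E3, |u x| ^ s
def Wmem (p : ℝ) (u : E3 → ℝ) : Prop :=
  Differentiable ℝ u ∧ MeasureTheory.Integrable (fun x : E3 => |u x| ^ p) ∧
    MeasureTheory.Integrable (fun x : E3 => ‖fderiv ℝ u x‖ ^ p)
def Ifun (a b p q : ℝ) (u : E3 → ℝ) : ℝ :=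
  a / p * gradPow p u + b / (2 * p) * (gradPow p u) ^ 2 - 1 / q * lpPow q u
def Sset (p c : ℝ) : Set (E3 → ℝ) := {u | Wmem p u ∧ lpPow p u = c ^ p}
def ifun (a b p q c : ℝ) : ℝ := sInf (Ifun a b p q '' Sset p c)

def cstar (a b p q QN : ℝ) : ℝ :=
  (p * QN ^ (q-p) * (a*p/(2*p^2 - 3*q + 3*p)) ^ ((2*p^2 - 3*q + 3*p)/p^2) *
    (b*p/(6*p*q - 8*p^2)) ^ ((3*q - 3*p - p^2)/p^2)) ^ (p/(p*q - 3*q + 3*p))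

lemma fderiv_scale (u : E3 → ℝ) (hu : Differentiable ℝ u) (s t : ℝ) (x : E3) :
    ‖fderiv ℝ (fun y : E3 => s * u (t • y)) x‖ = |s| * (|t| * ‖fderiv ℝ u (t • x)‖) := by
  have h1 : HasFDerivAt (fun y : E3 => t • y) (t • ContinuousLinearMap.id ℝ E3) x :=
    (hasFDerivAt_id x).const_smul t
  have h2 := (hu (t • x)).hasFDerivAt
  have h3 := (HasFDerivAt.comp x h2 h1).const_mul s
  have h3' : HasFDerivAt (fun y : E3 => s * u (t • y))
      (s • (fderiv ℝ u (t • x)).comp (t • ContinuousLinearMap.id ℝ E3)) x := h3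
  rw [h3'.fderiv]
  have h4 : (fderiv ℝ u (t • x)).comp (t • ContinuousLinearMap.id ℝ E3)
      = t • fderiv ℝ u (t • x) := by
    ext v
    simp [_root_.map_smul]
  rw [h4, norm_smul, norm_smul, Real.norm_eq_abs, Real.norm_eq_abs]

lemma integral_scale (g : E3 → ℝ) (t : ℝ) (ht : 0 ≤ t) :
    ∫ x : E3, g (t • x) = (t ^ (3:ℕ))⁻¹ * ∫ x : E3, g x := by
  rw [MeasureTheory.Measure.integral_comp_smul_of_nonneg volume g t (hR := ht)]
  simp [finrank_euclideanSpace_fin, smul_eq_mul]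

lemma scale_lp (r : ℝ) (u : E3 → ℝ) (s t : ℝ) (hs : 0 < s) (ht : 0 < t) :
    lpPow r (fun y : E3 => s * u (t • y)) = s ^ r * ((t ^ (3:ℕ))⁻¹ * lpPow r u) := by
  unfold lpPow
  have key : ∀ x : E3, |s * u (t • x)| ^ r = s ^ r * |u (t • x)| ^ r := by
    intro x
    rw [abs_mul, abs_of_pos hs, Real.mul_rpow hs.le (abs_nonneg _)]
  simp_rw [key]
  rw [integral_const_mul, integral_scale (fun y => |u y| ^ r) t ht.le]

lemma scale_grad (p : ℝ) (hp : 0 < p) (u : E3 → ℝ) (hu : Differentiable ℝ u)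
    (s t : ℝ) (hs : 0 < s) (ht : 0 < t) :
    gradPow p (fun y : E3 => s * u (t • y)) = (s * t) ^ p * ((t ^ (3:ℕ))⁻¹ * gradPow p u) := by
  unfold gradPow
  have key : ∀ x : E3, ‖fderiv ℝ (fun y : E3 => s * u (t • y)) x‖ ^ p
      = (s * t) ^ p * ‖fderiv ℝ u (t • x)‖ ^ p := by
    intro x
    rw [fderiv_scale u hu s t x, abs_of_pos hs, abs_of_pos ht, ← mul_assoc,
      Real.mul_rpow (by positivity) (norm_nonneg _)]
  simp_rw [key]
  rw [integral_const_mul, integral_scale (fun y => ‖fderiv ℝ u y‖ ^ p) t ht.le]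

lemma scale_wmem (p : ℝ) (hp : 0 < p) (u : E3 → ℝ) (hu : Wmem p u)
    (s t : ℝ) (hs : 0 < s) (ht : 0 < t) :
    Wmem p (fun y : E3 => s * u (t • y)) := by
  obtain ⟨hd, hi1, hi2⟩ := hu
  refine ⟨fun x => ?_, ?_, ?_⟩
  · exact ((hd.comp (differentiable_id.const_smul t)).const_mul s) x
  · have : (fun x : E3 => |s * u (t • x)| ^ p)
        = fun x : E3 => s ^ p * |u (t • x)| ^ p := by
      funext x
      rw [abs_mul, abs_of_pos hs, Real.mul_rpow hs.le (abs_nonneg _)]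
    rw [this]
    exact ((hi1.comp_smul ht.ne') ).const_mul _
  · have : (fun x : E3 => ‖fderiv ℝ (fun y : E3 => s * u (t • y)) x‖ ^ p)
        = fun x : E3 => (s * t) ^ p * ‖fderiv ℝ u (t • x)‖ ^ p := by
      funext x
      rw [fderiv_scale u hd s t x, abs_of_pos hs, abs_of_pos ht, ← mul_assoc,
        Real.mul_rpow (by positivity) (norm_nonneg _)]
    rw [this]
    exact ((hi2.comp_smul ht.ne')).const_mul _

lemma keyIneq (a b p q c QN G L : ℝ) (ha : 0 < a) (hb : 0 < b)
    (hp1 : 3/2 < p) (hp2 : p < 3) (hq1 : p + p^2/3 < q) (hq2 : q < p + 2*p^2/3)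
    (hQN : 0 < QN) (hc0 : 0 < c) (hc : c ≤ cstar a b p q QN) (hG : 0 ≤ G)
    (hL : L ≤ q / (p * QN ^ (q-p)) * G ^ (3*(q-p)/p^2) * (c^p) ^ ((q - 3*(q-p)/p)/p)) :
    1/(p * QN ^ (q-p)) * G ^ (3*(q-p)/p^2) *
        ((cstar a b p q QN) ^ (q - 3*(q-p)/p) - c ^ (q - 3*(q-p)/p))
      ≤ a/p * G + b/(2*p) * G^2 - 1/q * L ∧
    0 ≤ 1/(p * QN ^ (q-p)) * G ^ (3*(q-p)/p^2) *
        ((cstar a b p q QN) ^ (q - 3*(q-p)/p) - c ^ (q - 3*(q-p)/p)) := by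
  have hp0 : 0 < p := by linarith
  have hq0 : 0 < q := by nlinarith
  have hA : 0 < 2*p^2 - 3*q + 3*p := by nlinarith
  have hB : 0 < 3*q - 3*p - p^2 := by nlinarith
  have hB' : 0 < 6*p*q - 8*p^2 := by nlinarith
  have hE : 0 < p*q - 3*q + 3*p := by nlinarith
  have hp1pos : 0 < (2*p^2 - 3*q + 3*p)/p^2 := by positivity
  have hp2pos : 0 < (3*q - 3*p - p^2)/p^2 := by positivity
  set p₁ := (2*p^2 - 3*q + 3*p)/p^2 with hp₁def
  set p₂ := (3*q - 3*p - p^2)/p^2 with hp₂def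
  have hsum : p₁ + p₂ = 1 := by rw [hp₁def, hp₂def]; field_simp; ring
  set θ := 3*(q-p)/p^2 with hθdef
  have hθ : θ = p₁ + 2*p₂ := by rw [hθdef, hp₁def, hp₂def]; field_simp; ring
  have hθ0 : 0 < θ := by rw [hθ]; linarith
  set e := q - 3*(q-p)/p with hedef
  have hee : e = (p*q - 3*q + 3*p)/p := by rw [hedef]; field_simp; ring
  have he : 0 < e := by rw [hee]; positivity
  set D := p * QN ^ (q-p) with hD
  have hQNp : 0 < QN ^ (q-p) := Real.rpow_pos_of_pos hQN _
  have hDpos : 0 < D := by rw [hD]; positivity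
  set K1 := (a*p/(2*p^2 - 3*q + 3*p)) ^ p₁ with hK1
  set K2 := (b*p/(6*p*q - 8*p^2)) ^ p₂ with hK2
  have hK1pos : 0 < K1 := Real.rpow_pos_of_pos (by positivity) _
  have hK2pos : 0 < K2 := Real.rpow_pos_of_pos (by positivity) _
  have hDK : 0 < D * (K1 * K2) := by positivity
  have hC : cstar a b p q QN = (D * (K1 * K2)) ^ (p/(p*q - 3*q + 3*p)) := by
    unfold cstar
    rw [hK1, hK2, hD, hp₁def, hp₂def]
    ring_nf
  have hCe : (cstar a b p q QN) ^ e = D * (K1 * K2) := by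
    rw [hC, ← Real.rpow_mul hDK.le]
    have h1 : p/(p*q - 3*q + 3*p) * e = 1 := by
      rw [hee]; field_simp; exact div_self (ne_of_gt (by nlinarith))
    rw [h1, Real.rpow_one]
  -- Young / weighted AM-GM
  have hyoung : K1 * K2 * G ^ θ ≤ a/p * G + b/(2*p) * G^2 := by
    have hK1' : K1 = (a/(p*p₁)) ^ p₁ := by
      rw [hK1]; congr 1; rw [hp₁def]; field_simp
    have hbp : b/(2*p*p₂) = b*p/(2*(3*q-3*p-p^2)) := by
      rw [hp₂def]; field_simp
    have hK2' : K2 ≤ (b/(2*p*p₂)) ^ p₂ := by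
      rw [hK2, hbp]
      apply Real.rpow_le_rpow (by positivity) _ hp2pos.le
      gcongr
      nlinarith
    have hgm := Real.geom_mean_le_arith_mean2_weighted hp1pos.le hp2pos.le
      (show (0:ℝ) ≤ a/(p*p₁) * G by positivity)
      (show (0:ℝ) ≤ b/(2*p*p₂) * G^2 by positivity) hsum
    have hsplit : (a/(p*p₁) * G) ^ p₁ * (b/(2*p*p₂) * G^2) ^ p₂
        = ((a/(p*p₁)) ^ p₁ * (b/(2*p*p₂)) ^ p₂) * G ^ θ := by
      rw [Real.mul_rpow (by positivity) hG, Real.mul_rpow (by positivity) (by positivity)]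
      have h2 : (G^(2:ℕ)) ^ p₂ = G ^ (2*p₂) := by
        rw [← Real.rpow_natCast G 2, ← Real.rpow_mul hG]
        norm_num
      have h3 : G ^ p₁ * G ^ (2*p₂) = G ^ θ := by
        rw [← Real.rpow_add' hG (by rw [← hθ]; exact hθ0.ne'), ← hθ]
      rw [h2, ← h3]; ring
    have harith : p₁ * (a/(p*p₁) * G) + p₂ * (b/(2*p*p₂) * G^2) = a/p * G + b/(2*p) * G^2 := by
      field_simp
    calc K1 * K2 * G ^ θ
        ≤ ((a/(p*p₁)) ^ p₁ * (b/(2*p*p₂)) ^ p₂) * G ^ θ := by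
          apply mul_le_mul_of_nonneg_right _ (Real.rpow_nonneg hG θ)
          rw [hK1']
          exact mul_le_mul_of_nonneg_left hK2' (Real.rpow_nonneg (by positivity) _)
      _ = (a/(p*p₁) * G) ^ p₁ * (b/(2*p*p₂) * G^2) ^ p₂ := hsplit.symm
      _ ≤ p₁ * (a/(p*p₁) * G) + p₂ * (b/(2*p*p₂) * G^2) := hgm
      _ = a/p * G + b/(2*p) * G^2 := harith
  have hcpe : (c^p) ^ (e/p) = c ^ e := by
    rw [← Real.rpow_mul hc0.le]
    congr 1
    field_simp
  have hL' : 1/q * L ≤ 1/D * G ^ θ * c ^ e := by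
    have h4 : 1/q * (q/D * G ^ θ * c ^ e) = 1/D * G ^ θ * c ^ e := by
      field_simp
    calc 1/q * L ≤ 1/q * (q/D * G ^ θ * (c^p) ^ (e/p)) :=
          mul_le_mul_of_nonneg_left hL (by positivity)
      _ = 1/D * G ^ θ * c ^ e := by rw [hcpe]; exact h4
  constructor
  · have h1 : 1/D * G ^ θ * ((cstar a b p q QN) ^ e - c ^ e)
        = K1 * K2 * G ^ θ - 1/D * G ^ θ * c ^ e := by
      rw [hCe]; field_simp
    rw [h1]
    linarith
  · apply mul_nonneg (mul_nonneg (by positivity) (Real.rpow_nonneg hG _))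
    have := Real.rpow_le_rpow hc0.le hc he.le
    linarith

theorem stmt12 (a b p q c : ℝ) (Q : E3 → ℝ) (ha : 0 < a) (hb : 0 < b)
    (hp1 : 3/2 < p) (hp2 : p < 3) (hq1 : p + p^2/3 < q) (hq2 : q < p + 2*p^2/3)
    (hQpos : 0 < lpPow p Q)
    (hGN : ∀ u : E3 → ℝ, Wmem p u →
      lpPow q u ≤ q / (p * ((lpPow p Q) ^ (1/p)) ^ (q-p)) *
        (gradPow p u) ^ (3*(q-p)/p^2) * (lpPow p u) ^ ((q - 3*(q-p)/p)/p))
    (hc0 : 0 < c) (hc : c ≤ cstar a b p q ((lpPow p Q) ^ (1/p))) :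
    (∀ u ∈ Sset p c,
      1/(p * ((lpPow p Q) ^ (1/p)) ^ (q-p)) * (gradPow p u) ^ (3*(q-p)/p^2) *
        ((cstar a b p q ((lpPow p Q) ^ (1/p))) ^ (q - 3*(q-p)/p)
          - c ^ (q - 3*(q-p)/p)) ≤ Ifun a b p q u ∧
      0 ≤ 1/(p * ((lpPow p Q) ^ (1/p)) ^ (q-p)) * (gradPow p u) ^ (3*(q-p)/p^2) *
        ((cstar a b p q ((lpPow p Q) ^ (1/p))) ^ (q - 3*(q-p)/p)
          - c ^ (q - 3*(q-p)/p))) ∧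
    ifun a b p q c = 0 := by
  have hp0 : 0 < p := by linarith
  have hq0 : 0 < q := by nlinarith
  set QN := (lpPow p Q) ^ ((1:ℝ)/p) with hQNdef
  have hQN : 0 < QN := Real.rpow_pos_of_pos hQpos _
  have key : ∀ u ∈ Sset p c,
      1/(p * QN ^ (q-p)) * (gradPow p u) ^ (3*(q-p)/p^2) *
        ((cstar a b p q QN) ^ (q - 3*(q-p)/p) - c ^ (q - 3*(q-p)/p)) ≤ Ifun a b p q u ∧
      0 ≤ 1/(p * QN ^ (q-p)) * (gradPow p u) ^ (3*(q-p)/p^2) *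
        ((cstar a b p q QN) ^ (q - 3*(q-p)/p) - c ^ (q - 3*(q-p)/p)) := by
    intro u hu
    have hG : 0 ≤ gradPow p u :=
      integral_nonneg fun x => Real.rpow_nonneg (norm_nonneg _) p
    have hL := hGN u hu.1
    rw [hu.2] at hL
    exact keyIneq a b p q c QN (gradPow p u) (lpPow q u) ha hb hp1 hp2 hq1 hq2 hQN hc0 hc hG hL
  refine ⟨key, ?_⟩
  rcases (Sset p c).eq_empty_or_nonempty with hS | ⟨u, hu⟩
  · rw [ifun, hS, image_empty, Real.sInf_empty]
  · have hlb : ∀ y ∈ Ifun a b p q '' Sset p c, 0 ≤ y := by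
      rintro y ⟨v, hv, rfl⟩
      obtain ⟨h1, h2⟩ := key v hv
      linarith
    have hbdd : BddBelow (Ifun a b p q '' Sset p c) := ⟨0, hlb⟩
    have hge : 0 ≤ ifun a b p q c :=
      le_csInf ⟨_, mem_image_of_mem _ hu⟩ hlb
    have hle : ∀ ε : ℝ, 0 < ε → ifun a b p q c ≤ ε := by
      intro ε hε
      have hG : 0 ≤ gradPow p u :=
        integral_nonneg fun x => Real.rpow_nonneg (norm_nonneg _) p
      set G := gradPow p u with hGdef
      clear_value G
      set M := a/p * G + b/(2*p) * G^2 with hM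
      clear_value M
      have hM0 : 0 ≤ M := by
        have h1 : 0 ≤ a/p * G := mul_nonneg (by positivity) hG
        have h2 : 0 ≤ b/(2*p) * G^2 := mul_nonneg (by positivity) (sq_nonneg G)
        linarith
      set t := min 1 (ε / (M+1)) with htdef
      have ht0 : 0 < t := lt_min one_pos (by positivity)
      have ht1 : t ≤ 1 := min_le_left _ _
      set s := t ^ ((3:ℝ)/p) with hsdef
      have hs : 0 < s := Real.rpow_pos_of_pos ht0 _
      set w := fun x : E3 => s * u (t • x) with hw
      have hwmem : Wmem p w := scale_wmem p hp0 u hu.1 s t hs ht0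
      have hsp : s ^ p = t ^ (3:ℕ) := by
        have h3 : (3:ℝ)/p * p = 3 := by field_simp
        rw [hsdef, ← Real.rpow_mul ht0.le, h3, ← Real.rpow_natCast t 3]
        norm_num
      have hwS : w ∈ Sset p c := by
        refine ⟨hwmem, ?_⟩
        rw [hw, scale_lp p u s t hs ht0, hsp, hu.2, ← mul_assoc,
          mul_inv_cancel₀ (pow_ne_zero _ ht0.ne'), one_mul]
      have hgw : gradPow p w = (s*t)^p * ((t^(3:ℕ))⁻¹ * G) := by
        rw [hw, hGdef]
        exact scale_grad p hp0 u hu.1.1 s t hs ht0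
      have hst : (s*t)^p * (t^(3:ℕ))⁻¹ = t^p := by
        rw [Real.mul_rpow hs.le ht0.le, hsp]
        field_simp
      have hgw' : gradPow p w = t^p * G := by rw [hgw, ← mul_assoc, hst]
      have hLq : 0 ≤ lpPow q w :=
        integral_nonneg fun x => Real.rpow_nonneg (abs_nonneg _) q
      have htp : t ^ p ≤ t := by
        calc t^p ≤ t^(1:ℝ) := Real.rpow_le_rpow_of_exponent_ge ht0 ht1 (by linarith)
          _ = t := Real.rpow_one t
      have htp1 : t ^ p ≤ 1 := Real.rpow_le_one ht0.le ht1 (by linarith)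
      have htp0 : 0 ≤ t ^ p := Real.rpow_nonneg ht0.le p
      have hIw : Ifun a b p q w ≤ t * M := by
        unfold Ifun
        rw [hgw']
        have h5 : a/p * (t^p * G) ≤ t * (a/p * G) := by
          have := mul_le_mul_of_nonneg_right htp (mul_nonneg (le_of_lt (by positivity : (0:ℝ) < a/p)) hG)
          nlinarith [mul_nonneg (le_of_lt (by positivity : (0:ℝ) < a/p)) hG]
        have h7 : (t^p)^2 ≤ t := by nlinarith
        have h6 : b/(2*p) * (t^p * G)^2 ≤ t * (b/(2*p) * G^2) := by
          calc b/(2*p) * (t^p * G)^2 = (t^p)^2 * (b/(2*p) * G^2) := by ring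
            _ ≤ t * (b/(2*p) * G^2) :=
              mul_le_mul_of_nonneg_right h7
                (mul_nonneg (le_of_lt (by positivity : (0:ℝ) < b/(2*p))) (sq_nonneg G))
        have h8 : 0 ≤ 1/q * lpPow q w := mul_nonneg (by positivity) hLq
        have h9 : t * M = t * (a/p * G) + t * (b/(2*p) * G^2) := by rw [hM]; ring
        linarith
      have h9 : ifun a b p q c ≤ t * M :=
        le_trans (csInf_le hbdd (mem_image_of_mem _ hwS)) hIw
      have h10 : t * M ≤ ε := by
        have h11 : t ≤ ε/(M+1) := min_le_right _ _
        calc t*M ≤ (ε/(M+1))*M := mul_le_mul_of_nonneg_right h11 hM0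
          _ ≤ ε := by
            rw [div_mul_eq_mul_div, div_le_iff₀ (by positivity)]
            nlinarith
      linarith
    have hle0 : ifun a b p q c ≤ 0 := by
      by_contra h
      push_neg at h
      have := hle (ifun a b p q c / 2) (by linarith)
      linarith
    exact le_antisymm hle0 hge
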